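/- Let G be a semicomplete digraph that has a (2l,w)-degree tangle. Then G has a tame (l,w)-degree tangle or an (l,w)-spider. -/

import Mathlib

namespace AlmostSemicomplete

variable {V : Type} [Fintype V] [DecidableEq V]

/-- The closed out-neighborhood `N⁺[U]`. -/
def closedOut (E : V → V → Prop) [DecidableRel E] (U : Finset V) : Finset V :=
  U.biUnion fun u => insert u (Finset.univ.filter fun w => E u w)

/-- The closed in-neighborhood `N⁻[U]`. -/
def closedIn (E : V → V → Prop) [DecidableRel E] (U : Finset V) : Finset V :=
  U.biUnion fun u => insert u (Finset.univ.filter fun w => E w u)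

/-- The open out-neighborhood `N⁺(U)`. -/
def openOut (E : V → V → Prop) [DecidableRel E] (U : Finset V) : Finset V :=
  closedOut E U \ U

/-- The open in-neighborhood `N⁻(U)`. -/
def openIn (E : V → V → Prop) [DecidableRel E] (U : Finset V) : Finset V :=
  closedIn E U \ U

/-- `d⁺(U)`, the number of out-neighbors of the set `U`. -/
def dOut (E : V → V → Prop) [DecidableRel E] (U : Finset V) : ℕ := (openOut E U).card

/-- `d⁻(U)`, the number of in-neighbors of the set `U`. -/
def dIn (E : V → V → Prop) [DecidableRel E] (U : Finset V) : ℕ := (openIn E U).card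

/-- Out-neighbors of a vertex. -/
def NoutV (E : V → V → Prop) [DecidableRel E] (v : V) : Finset V :=
  Finset.univ.filter fun w => E v w

/-- In-neighbors of a vertex. -/
def NinV (E : V → V → Prop) [DecidableRel E] (v : V) : Finset V :=
  Finset.univ.filter fun w => E w v

/-- Out-degree of a vertex. -/
def dOutV (E : V → V → Prop) [DecidableRel E] (v : V) : ℕ := (NoutV E v).card

/-- In-degree of a vertex. -/
def dInV (E : V → V → Prop) [DecidableRel E] (v : V) : ℕ := (NinV E v).card

/-- A separation of a digraph: `A ∪ B = V` and no edge from `A ∖ B` to `B ∖ A`. -/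
def IsSep (E : V → V → Prop) (A B : Finset V) : Prop :=
  A ∪ B = Finset.univ ∧ ∀ a ∈ A, a ∉ B → ∀ b ∈ B, b ∉ A → ¬ E a b

/-- An `S`–`T` separation. -/
def IsSTSep (E : V → V → Prop) (S T A B : Finset V) : Prop :=
  IsSep E A B ∧ S ∩ B = ∅ ∧ T ∩ A = ∅

/-- A minimum `S`–`T` separation, i.e. one of smallest order `|A ∩ B|`. -/
def IsMinSTSep (E : V → V → Prop) (S T X Y : Finset V) : Prop :=
  IsSTSep E S T X Y ∧ ∀ A B : Finset V, IsSTSep E S T A B → (X ∩ Y).card ≤ (A ∩ B).card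

/-- A separation chain: a list of separations with the first components nondecreasing
and the second components nonincreasing. -/
def IsSepChain (E : V → V → Prop) (C : List (Finset V × Finset V)) : Prop :=
  (∀ p ∈ C, IsSep E p.1 p.2) ∧ List.Chain' (fun p q => p.1 ⊆ q.1 ∧ q.2 ⊆ p.2) C

/-- A separation chain is gapless if consecutive separations differ by at most one vertex
on at least one side. -/
def Gapless (C : List (Finset V × Finset V)) : Prop :=
  List.Chain' (fun p q => (q.1 \ p.1).card ≤ 1 ∨ (p.2 \ q.2).card ≤ 1) C

/-- A separation chain is nice if consecutive separations differ by at most one vertex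
on both sides. -/
def Nice (C : List (Finset V × Finset V)) : Prop :=
  List.Chain' (fun p q => (q.1 \ p.1).card ≤ 1 ∧ (p.2 \ q.2).card ≤ 1) C

/-- An `S`–`T` chain: a separation chain whose first separation has second component
`V ∖ S` and whose last separation has first component `V ∖ T`. -/
def IsSTChain (E : V → V → Prop) (S T : Finset V) (C : List (Finset V × Finset V)) : Prop :=
  IsSepChain E C ∧ C.head?.map Prod.snd = some (Finset.univ \ S) ∧
    C.getLast?.map Prod.fst = some (Finset.univ \ T)

/-- An `S`–`T` chain is tight if `A_0 = N⁺[S]` and `B_r = N⁻[T]`. -/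
def Tight (E : V → V → Prop) [DecidableRel E] (S T : Finset V)
    (C : List (Finset V × Finset V)) : Prop :=
  C.head?.map Prod.fst = some (closedOut E S) ∧
    C.getLast?.map Prod.snd = some (closedIn E T)

/-- The order of a separation chain: the maximum order of its member separations. -/
def chainOrder (C : List (Finset V × Finset V)) : ℕ :=
  (C.map fun p => (p.1 ∩ p.2).card).foldr max 0

/-- The chain has order at most `k`. -/
def orderLE (C : List (Finset V × Finset V)) (k : ℕ) : Prop :=
  ∀ p ∈ C, (p.1 ∩ p.2).card ≤ k

/-- A path decomposition of a digraph. -/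
def IsPathDecomp {m : ℕ} (E : V → V → Prop) (X : Fin m → Finset V) : Prop :=
  (∀ v : V, ∃ i, v ∈ X i) ∧
  (∀ u v : V, E u v → ∃ i j : Fin m, j ≤ i ∧ u ∈ X i ∧ v ∈ X j) ∧
  (∀ (v : V) (i j k : Fin m), i ≤ j → j ≤ k → v ∈ X i → v ∈ X k → v ∈ X j)

/-- The width of a path decomposition: maximum bag size minus one. -/
def pdWidth {m : ℕ} (X : Fin m → Finset V) : ℕ :=
  (Finset.univ.sup fun i => (X i).card) - 1

/-- The pathwidth of a digraph. -/
noncomputable def pathwidth (E : V → V → Prop) : ℕ :=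
  sInf {k | ∃ (m : ℕ) (X : Fin m → Finset V), IsPathDecomp E X ∧ pdWidth X = k}

/-- An `h`-semicomplete digraph: every vertex has at most `h` non-neighbors. -/
def HSemicomplete (E : V → V → Prop) [DecidableRel E] (h : ℕ) : Prop :=
  ∀ v : V, (Finset.univ.filter fun u => u ≠ v ∧ ¬ E u v ∧ ¬ E v u).card ≤ h

/-- A semicomplete digraph: between any two distinct vertices there is an edge in
at least one direction. -/
def Semicomplete (E : V → V → Prop) : Prop := ∀ u v : V, u ≠ v → E u v ∨ E v u

/-- A `k`-admissible pair `(S, T)`. -/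
def kAdmissible (E : V → V → Prop) [DecidableRel E] (k : ℕ) (S T : Finset V) : Prop :=
  closedOut E S ∩ T = ∅ ∧ dOut E S ≤ k ∧ dIn E T ≤ k

/-- The potential `μ(S,T) = 2|V ∖ (N⁺[S] ∪ N⁻[T])| + |N⁺(S) Δ N⁻(T)|`. -/
def mu (E : V → V → Prop) [DecidableRel E] (S T : Finset V) : ℕ :=
  2 * (Finset.univ \ (closedOut E S ∪ closedIn E T)).card +
    (symmDiff (openOut E S) (openIn E T)).card

/-- The wildness of a vertex. -/
def wld (E : V → V → Prop) [DecidableRel E] (v : V) : ℕ :=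
  ((Finset.univ.filter fun u => dOutV E u ≤ dOutV E v) \ NoutV E v).card

/-- A `(d, l, k)`-degree tangle. -/
def IsDegTangle (E : V → V → Prop) [DecidableRel E] (d l k : ℕ) (T : Finset V) : Prop :=
  T.card = l ∧ ∀ v ∈ T, d ≤ dOutV E v ∧ dOutV E v ≤ d + k

/-- A `(d, l, k)`-matching tangle. -/
def IsMatchTangle (E : V → V → Prop) [DecidableRel E] (d l k : ℕ)
    (T₁ T₂ : Finset V) : Prop :=
  T₁.card = l ∧ T₂.card = l ∧ (∀ v ∈ T₁, dOutV E v ≤ d) ∧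
    (∀ v ∈ T₂, d + k + 1 ≤ dOutV E v) ∧
    ∃ φ : V → V, Set.BijOn φ ↑T₁ ↑T₂ ∧ ∀ v ∈ T₁, E v (φ v)

/-- A `(d, l, w)`-spider. -/
def IsSpider (E : V → V → Prop) [DecidableRel E] (d l w : ℕ) (T : Finset V)
    (L R : V → Finset V) : Prop :=
  l ≤ T.card ∧ ∀ v ∈ T,
    L v ⊆ NinV E v ∧ 3 * l ≤ (L v).card ∧ (∀ u ∈ L v, dOutV E u ≤ d) ∧
    R v ⊆ NoutV E v ∧ 3 * l ≤ (R v).card ∧ (∀ u ∈ R v, d + w ≤ dOutV E u)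

/-- Tameness of a left-side vertex of a `(d,l,w)`-spider:
`wld(u) ≤ 3l + d + w − d⁺(u) + 2·pw(G)`, stated additively. -/
def LeftTame (E : V → V → Prop) [DecidableRel E] (d l w : ℕ) (u : V) : Prop :=
  wld E u + dOutV E u ≤ 3 * l + d + w + 2 * pathwidth E

/-- Tameness of a right-side vertex of a `(d,l,w)`-spider:
`wld(u) ≤ 3l + d⁺(u) − d + 2·pw(G)`, stated additively. -/
def RightTame (E : V → V → Prop) [DecidableRel E] (d l w : ℕ) (u : V) : Prop :=
  wld E u + d ≤ 3 * l + dOutV E u + 2 * pathwidth E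

/-- A tame `(d, l, w)`-spider: each `L_v` and each `R_v` contains at least `2l`
tame vertices. -/
def IsTameSpider (E : V → V → Prop) [DecidableRel E] (d l w : ℕ) (T : Finset V)
    (L R : V → Finset V) : Prop :=
  IsSpider E d l w T L R ∧ ∀ v ∈ T,
    (∃ L' ⊆ L v, 2 * l ≤ L'.card ∧ ∀ u ∈ L', LeftTame E d l w u) ∧
    (∃ R' ⊆ R v, 2 * l ≤ R'.card ∧ ∀ u ∈ R', RightTame E d l w u)


/-! ### Auxiliary lemmas -/

lemma window_card_of_decomp (E : V → V → Prop) [DecidableRel E]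
    (hirr : Irreflexive E) (hsc : Semicomplete E)
    {m : ℕ} (X : Fin m → Finset V) (hX : IsPathDecomp E X)
    {B : ℕ} (hB : ∀ i, (X i).card ≤ B) (hB1 : 1 ≤ B)
    (a k : ℕ) (S : Finset V)
    (hS : ∀ v ∈ S, a ≤ dOutV E v ∧ dOutV E v ≤ a + k) :
    S.card + 1 ≤ k + 2 * B := by
  classical
  obtain ⟨hcov, hedge, hconn⟩ := hX
  set F : ℕ → Finset V :=
    fun t => Finset.univ.filter fun v => ∀ i : Fin m, v ∈ X i → i.1 < t with hF
  set U : ℕ → Finset V :=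
    fun t => Finset.univ.filter fun v => ∀ i : Fin m, v ∈ X i → t ≤ i.1 with hU
  have memF : ∀ (t : ℕ) (v : V), v ∈ F t ↔ ∀ i : Fin m, v ∈ X i → i.1 < t := by
    intro t v; simp [hF]
  have memU : ∀ (t : ℕ) (v : V), v ∈ U t ↔ ∀ i : Fin m, v ∈ X i → t ≤ i.1 := by
    intro t v; simp [hU]
  have Fmono : ∀ {s t : ℕ}, s ≤ t → F s ⊆ F t := by
    intro s t hst v hv
    rw [memF] at hv ⊢
    intro i hi; exact lt_of_lt_of_le (hv i hi) hst
  have Umono : ∀ {s t : ℕ}, s ≤ t → U t ⊆ U s := by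
    intro s t hst v hv
    rw [memU] at hv ⊢
    intro i hi; exact le_trans hst (hv i hi)
  have hdisj : ∀ (t : ℕ) (v : V), v ∈ F t → v ∈ U t → False := by
    intro t v hF' hU'
    rw [memF] at hF'; rw [memU] at hU'
    obtain ⟨i, hi⟩ := hcov v
    exact absurd (hU' i hi) (not_le.2 (hF' i hi))
  have hnoedge : ∀ (t : ℕ) (u v : V), u ∈ F t → v ∈ U t → ¬ E u v := by
    intro t u v hu hv he
    rw [memF] at hu; rw [memU] at hv
    obtain ⟨i, j, hji, hui, hvj⟩ := hedge u v he
    have h1 := hu i hui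
    have h2 := hv j hvj
    have h3 : (j : ℕ) ≤ (i : ℕ) := hji
    omega
  have hUout : ∀ (t : ℕ) (v : V), v ∈ U t → F t ⊆ NoutV E v := by
    intro t v hv u hu
    have hne : u ≠ v := fun h => hdisj t v (h ▸ hu) hv
    have hnf : ¬ E u v := hnoedge t u v hu hv
    rcases hsc v u (fun h => hne h.symm) with h | h
    · simp only [NoutV, Finset.mem_filter, Finset.mem_univ, true_and]; exact h
    · exact absurd h hnf
  have hFout : ∀ (t : ℕ) (u : V), u ∈ F t →
      dOutV E u + (U t).card + 1 ≤ Fintype.card V := by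
    intro t u hu
    have hsub : NoutV E u ∪ U t ⊆ Finset.univ.erase u := by
      intro x hx
      rcases Finset.mem_union.1 hx with hx | hx
      · refine Finset.mem_erase.2 ⟨?_, Finset.mem_univ x⟩
        intro h
        have hxx : E u x := by simpa [NoutV] using hx
        rw [h] at hxx
        exact hirr u hxx
      · refine Finset.mem_erase.2 ⟨?_, Finset.mem_univ x⟩
        intro h
        rw [h] at hx
        exact hdisj t u hu hx
    have hdj : Disjoint (NoutV E u) (U t) := by
      rw [Finset.disjoint_left]
      intro x hx hx'
      have hx2 : E u x := by simpa [NoutV] using hx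
      exact hnoedge t u x hu hx' hx2
    have h1 : (NoutV E u ∪ U t).card = dOutV E u + (U t).card := by
      rw [Finset.card_union_of_disjoint hdj]; rfl
    have h2 := Finset.card_le_card hsub
    rw [Finset.card_erase_of_mem (Finset.mem_univ u), Finset.card_univ] at h2
    have h3 : 1 ≤ Fintype.card V := Fintype.card_pos_iff.2 ⟨u⟩
    omega
  have midbag : ∀ (t : ℕ) (ht : t < m) (v : V), v ∉ F t → v ∉ U t → v ∈ X ⟨t, ht⟩ := by
    intro t ht v hvF hvU
    rw [memF] at hvF; rw [memU] at hvU
    push_neg at hvF hvU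
    obtain ⟨i, hvi, hti⟩ := hvF
    obtain ⟨j, hvj, hjt⟩ := hvU
    exact hconn v j ⟨t, ht⟩ i (Fin.le_def.2 (show (j : ℕ) ≤ t by omega))
      (Fin.le_def.2 (show t ≤ (i : ℕ) by omega)) hvj hvi
  have midbagL : ∀ (t : ℕ) (h1 : 1 ≤ t) (hm : t - 1 < m) (v : V),
      v ∉ F t → v ∉ U t → v ∈ X ⟨t - 1, hm⟩ := by
    intro t h1 hm v hvF hvU
    rw [memF] at hvF; rw [memU] at hvU
    push_neg at hvF hvU
    obtain ⟨i, hvi, hti⟩ := hvF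
    obtain ⟨j, hvj, hjt⟩ := hvU
    exact hconn v j ⟨t - 1, hm⟩ i (Fin.le_def.2 (show (j : ℕ) ≤ t - 1 by omega))
      (Fin.le_def.2 (show t - 1 ≤ (i : ℕ) by omega)) hvj hvi
  have jumpU : ∀ (t : ℕ) (ht : t < m) (v : V), v ∈ U t → v ∉ U (t + 1) → v ∈ X ⟨t, ht⟩ := by
    intro t ht v hvU hvU'
    rw [memU] at hvU; rw [memU] at hvU'
    push_neg at hvU'
    obtain ⟨i, hvi, hit⟩ := hvU'
    have h1 := hvU i hvi
    have h2 : i = ⟨t, ht⟩ := Fin.ext (show (i : ℕ) = t by omega)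
    rw [← h2]; exact hvi
  have hUm : ∀ v : V, v ∉ U m := by
    intro v hv
    rw [memU] at hv
    obtain ⟨i, hi⟩ := hcov v
    exact absurd (hv i hi) (not_le.2 i.2)
  have hU0 : ∀ v : V, v ∈ U 0 := by
    intro v; rw [memU]; intro i _; exact Nat.zero_le _
  have hPex : ∃ t, S ∩ U t = ∅ :=
    ⟨m, Finset.eq_empty_of_forall_notMem fun v hv => hUm v (Finset.mem_inter.1 hv).2⟩
  set t2 := Nat.find hPex with ht2def
  have ht2 : S ∩ U t2 = ∅ := Nat.find_spec hPex
  have ht2min : ∀ t, t < t2 → (S ∩ U t).Nonempty := by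
    intro t ht
    rcases Finset.eq_empty_or_nonempty (S ∩ U t) with h | h
    · exact absurd h (Nat.find_min hPex ht)
    · exact h
  have ht2m : t2 ≤ m :=
    Nat.find_le (Finset.eq_empty_of_forall_notMem fun v hv => hUm v (Finset.mem_inter.1 hv).2)
  set t1 := Nat.findGreatest (fun t => S ∩ F t = ∅) m with ht1def
  have hF0 : S ∩ F 0 = ∅ := by
    apply Finset.eq_empty_of_forall_notMem
    intro v hv
    have h1 := (Finset.mem_inter.1 hv).2
    rw [memF] at h1
    obtain ⟨i, hi⟩ := hcov v
    exact absurd (h1 i hi) (by omega)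
  have ht1 : S ∩ F t1 = ∅ :=
    Nat.findGreatest_spec (P := fun t => S ∩ F t = ∅) (Nat.zero_le m) hF0
  have ht1m : t1 ≤ m := Nat.findGreatest_le m
  by_cases hcase : t2 ≤ t1
  · have hSU : ∀ v ∈ S, v ∉ U t1 := by
      intro v hv hvU
      have h1 : v ∈ S ∩ U t2 := Finset.mem_inter.2 ⟨hv, Umono hcase hvU⟩
      rw [ht2] at h1; exact Finset.notMem_empty v h1
    rcases Nat.eq_zero_or_pos t1 with h0 | hpos
    · have hSe : S = ∅ := Finset.eq_empty_of_forall_notMem fun v hv => hSU v hv (h0 ▸ hU0 v)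
      rw [hSe]; simp; omega
    · have hm : t1 - 1 < m := by omega
      have hsub : S ⊆ X ⟨t1 - 1, hm⟩ := by
        intro v hv
        have hvF : v ∉ F t1 := fun h =>
          Finset.notMem_empty v (ht1 ▸ Finset.mem_inter.2 ⟨hv, h⟩)
        exact midbagL t1 hpos hm v hvF (hSU v hv)
      have h1 := Finset.card_le_card hsub
      have h2 := hB ⟨t1 - 1, hm⟩
      omega
  · push_neg at hcase
    have h1t2 : 1 ≤ t2 := by omega
    have hmt2 : t2 - 1 < m := by omega
    obtain ⟨v, hv⟩ := ht2min (t2 - 1) (by omega)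
    obtain ⟨hvS, hvU⟩ := Finset.mem_inter.1 hv
    have hFv : (F (t2 - 1)).card ≤ a + k :=
      le_trans (Finset.card_le_card (hUout _ v hvU)) (hS v hvS).2
    have ht1max : (S ∩ F (t1 + 1)).Nonempty := by
      rcases Finset.eq_empty_or_nonempty (S ∩ F (t1 + 1)) with h | h
      · have hgr := Nat.findGreatest_is_greatest (P := fun t => S ∩ F t = ∅)
          (n := m) (k := t1 + 1) (by omega) (by omega)
        exact absurd h hgr
      · exact h
    obtain ⟨u, hu⟩ := ht1max
    obtain ⟨huS, huF⟩ := Finset.mem_inter.1 hu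
    have ht1m' : t1 < m := by omega
    have hUu : a + (U (t1 + 1)).card + 1 ≤ Fintype.card V := by
      have h1 := hFout (t1 + 1) u huF
      have h2 := (hS u huS).1
      omega
    have hsplit : Fintype.card V ≤ (F t1).card + (U (t1 + 1)).card + B := by
      have hcover : (Finset.univ : Finset V) ⊆ F t1 ∪ U (t1 + 1) ∪ X ⟨t1, ht1m'⟩ := by
        intro x _
        by_cases h1 : x ∈ F t1
        · exact Finset.mem_union.2 (Or.inl (Finset.mem_union.2 (Or.inl h1)))
        by_cases h2 : x ∈ U (t1 + 1)
        · exact Finset.mem_union.2 (Or.inl (Finset.mem_union.2 (Or.inr h2)))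
        by_cases h3 : x ∈ U t1
        · exact Finset.mem_union.2 (Or.inr (jumpU t1 ht1m' x h3 h2))
        · exact Finset.mem_union.2 (Or.inr (midbag t1 ht1m' x h1 h3))
      have hc1 := Finset.card_le_card hcover
      rw [Finset.card_univ] at hc1
      have hc2 := Finset.card_union_le (F t1 ∪ U (t1 + 1)) (X ⟨t1, ht1m'⟩)
      have hc3 := Finset.card_union_le (F t1) (U (t1 + 1))
      have hc4 := hB ⟨t1, ht1m'⟩
      omega
    have hup : S.card + (F t1).card ≤ (F (t2 - 1)).card + B := by
      have hdSF : Disjoint S (F t1) := by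
        rw [Finset.disjoint_left]
        intro x hx hx'
        exact Finset.notMem_empty x (ht1 ▸ Finset.mem_inter.2 ⟨hx, hx'⟩)
      have hsub : S ∪ F t1 ⊆ F (t2 - 1) ∪ X ⟨t2 - 1, hmt2⟩ := by
        intro x hx
        rcases Finset.mem_union.1 hx with hx | hx
        · by_cases h1 : x ∈ F (t2 - 1)
          · exact Finset.mem_union.2 (Or.inl h1)
          · have hxU2 : x ∉ U t2 := fun h =>
              Finset.notMem_empty x (ht2 ▸ Finset.mem_inter.2 ⟨hx, h⟩)
            by_cases h3 : x ∈ U (t2 - 1)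
            · have h4 : x ∉ U (t2 - 1 + 1) := by
                have e : t2 - 1 + 1 = t2 := by omega
                rw [e]; exact hxU2
              exact Finset.mem_union.2 (Or.inr (jumpU (t2 - 1) hmt2 x h3 h4))
            · exact Finset.mem_union.2 (Or.inr (midbag (t2 - 1) hmt2 x h1 h3))
        · exact Finset.mem_union.2 (Or.inl (Fmono (by omega) hx))
      have h1 := Finset.card_le_card hsub
      rw [Finset.card_union_of_disjoint hdSF] at h1
      have h2 := Finset.card_union_le (F (t2 - 1)) (X ⟨t2 - 1, hmt2⟩)
      have h3 := hB ⟨t2 - 1, hmt2⟩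
      omega
    omega

lemma exists_min_pd (E : V → V → Prop) [DecidableRel E] :
    ∃ (m : ℕ) (X : Fin m → Finset V), IsPathDecomp E X ∧ pdWidth X = pathwidth E := by
  have hne : {k | ∃ (m : ℕ) (X : Fin m → Finset V), IsPathDecomp E X ∧ pdWidth X = k}.Nonempty := by
    refine ⟨pdWidth (fun _ : Fin 1 => (Finset.univ : Finset V)), 1,
      fun _ => Finset.univ, ⟨?_, ?_, ?_⟩, rfl⟩
    · intro v; exact ⟨0, Finset.mem_univ v⟩
    · intro u v _; exact ⟨0, 0, le_refl _, Finset.mem_univ u, Finset.mem_univ v⟩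
    · intro v i j k _ _ _ _; exact Finset.mem_univ v
  have h := Nat.sInf_mem hne
  exact h

lemma window_card (E : V → V → Prop) [DecidableRel E]
    (hirr : Irreflexive E) (hsc : Semicomplete E)
    (a k : ℕ) (S : Finset V)
    (hS : ∀ v ∈ S, a ≤ dOutV E v ∧ dOutV E v ≤ a + k) :
    S.card ≤ k + 2 * pathwidth E + 1 := by
  obtain ⟨m, X, hX, hw⟩ := exists_min_pd E
  have hB : ∀ i, (X i).card ≤ pathwidth E + 1 := by
    intro i
    have h1 : (X i).card ≤ Finset.univ.sup fun j => (X j).card :=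
      Finset.le_sup (f := fun j => (X j).card) (Finset.mem_univ i)
    have h2 : pdWidth X = pathwidth E := hw
    unfold pdWidth at h2
    omega
  have := window_card_of_decomp E hirr hsc X hX hB (by omega) a k S hS
  omega


/-- If a semicomplete digraph has a `(2l,w)`-degree tangle, then it has a tame
`(l,w)`-degree tangle or an `(l,w)`-spider. -/
theorem tame_degree_tangle_or_spider (E : V → V → Prop) [DecidableRel E]
    (hirr : Irreflexive E) (hsc : Semicomplete E)
    (l w : ℕ) (hl : 0 < l) (hw : 0 < w)
    (d : ℕ) (T : Finset V) (hT : IsDegTangle E d (2 * l) w T) :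
    (∃ (d' : ℕ) (T' : Finset V), IsDegTangle E d' l w T' ∧
        ∀ v ∈ T', wld E v ≤ 3 * l + w + 2 * pathwidth E) ∨
    (∃ (d' : ℕ) (T' : Finset V) (L R : V → Finset V), IsSpider E d' l w T' L R) := by
  classical
  obtain ⟨hTcard, hTdeg⟩ := hT
  set p := pathwidth E with hp
  by_cases hc : l ≤ (T.filter fun v => wld E v ≤ 3 * l + w + 2 * p).card
  · left
    obtain ⟨T', hT'sub, hT'card⟩ := Finset.exists_subset_card_eq hc
    refine ⟨d, T', ⟨hT'card, ?_⟩, ?_⟩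
    · intro v hv
      exact hTdeg v (Finset.mem_filter.1 (hT'sub hv)).1
    · intro v hv
      exact (Finset.mem_filter.1 (hT'sub hv)).2
  · right
    set Tw := T.filter fun v => 3 * l + w + 2 * p + 1 ≤ wld E v with hTwdef
    have hTw : l ≤ Tw.card := by
      have hTsub : T ⊆ (T.filter fun v => wld E v ≤ 3 * l + w + 2 * p) ∪ Tw := by
        intro v hv
        by_cases h : wld E v ≤ 3 * l + w + 2 * p
        · exact Finset.mem_union_left _ (Finset.mem_filter.2 ⟨hv, h⟩)
        · exact Finset.mem_union_right _ (Finset.mem_filter.2 ⟨hv, by omega⟩)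
      have h1 := Finset.card_le_card hTsub
      have h2 := Finset.card_union_le (T.filter fun v => wld E v ≤ 3 * l + w + 2 * p) Tw
      push_neg at hc
      omega
    have hmid : (Finset.univ.filter fun u : V =>
        d + 1 ≤ dOutV E u ∧ dOutV E u ≤ d + w).card ≤ (w - 1) + 2 * p + 1 := by
      apply window_card E hirr hsc (d + 1) (w - 1)
      intro u hu
      rw [Finset.mem_filter] at hu
      constructor
      · exact hu.2.1
      · have := hu.2.2; omega
    have hlow : (Finset.univ.filter fun u : V => dOutV E u ≤ d + w).card
        ≤ (d + w) + 2 * p + 1 := by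
      apply window_card E hirr hsc 0 (d + w)
      intro u hu
      rw [Finset.mem_filter] at hu
      exact ⟨Nat.zero_le _, by simpa using hu.2⟩
    set LL : V → Finset V := fun v =>
      Finset.filter (fun u => dOutV E u ≤ d)
        ((Finset.filter (fun u => dOutV E u ≤ dOutV E v) Finset.univ \ NoutV E v) \ {v})
      with hLL
    set RR : V → Finset V := fun v =>
      Finset.filter (fun u => d + w ≤ dOutV E u) (NoutV E v) with hRR
    refine ⟨d, Tw, LL, RR, hTw, ?_⟩
    intro v hv
    rw [hTwdef, Finset.mem_filter] at hv
    obtain ⟨hvT, hwld⟩ := hv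
    obtain ⟨hdv1, hdv2⟩ := hTdeg v hvT
    set W := Finset.filter (fun u => dOutV E u ≤ dOutV E v) Finset.univ \ NoutV E v with hWdef
    have hWcard : wld E v = W.card := rfl
    have hLdef : LL v = Finset.filter (fun u => dOutV E u ≤ d) (W \ {v}) := rfl
    have hRdef : RR v = Finset.filter (fun u => d + w ≤ dOutV E u) (NoutV E v) := rfl
    set Lv := LL v with hLv
    set Rv := RR v with hRv
    have hWmem : ∀ u ∈ W, dOutV E u ≤ dOutV E v ∧ u ∉ NoutV E v := by
      intro u hu
      rw [hWdef, Finset.mem_sdiff, Finset.mem_filter] at hu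
      exact ⟨hu.1.2, hu.2⟩
    refine ⟨?_, ?_, ?_, ?_, ?_, ?_⟩
    · -- Lv ⊆ NinV E v
      intro u hu
      rw [hLdef, Finset.mem_filter, Finset.mem_sdiff, Finset.mem_singleton] at hu
      obtain ⟨⟨huW, hune⟩, _⟩ := hu
      have hnout : ¬ E v u := by
        have h1 := (hWmem u huW).2
        intro h
        exact h1 (by simp [NoutV, h])
      rcases hsc u v hune with h | h
      · simp only [NinV, Finset.mem_filter, Finset.mem_univ, true_and]; exact h
      · exact absurd h hnout
    · -- 3l ≤ card Lv
      have hcov : W ⊆ Lv ∪ {v} ∪ (Finset.univ.filter fun u : V =>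
          d + 1 ≤ dOutV E u ∧ dOutV E u ≤ d + w) := by
        intro u hu
        by_cases h1 : u = v
        · exact Finset.mem_union.2 (Or.inl (Finset.mem_union.2 (Or.inr (by simp [h1]))))
        by_cases h2 : dOutV E u ≤ d
        · refine Finset.mem_union.2 (Or.inl (Finset.mem_union.2 (Or.inl ?_)))
          rw [hLdef, Finset.mem_filter, Finset.mem_sdiff, Finset.mem_singleton]
          exact ⟨⟨hu, h1⟩, h2⟩
        · refine Finset.mem_union.2 (Or.inr ?_)
          rw [Finset.mem_filter]
          refine ⟨Finset.mem_univ u, by omega, ?_⟩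
          have := (hWmem u hu).1
          omega
      have h1 := Finset.card_le_card hcov
      have h2 := Finset.card_union_le (Lv ∪ {v}) (Finset.univ.filter fun u : V =>
          d + 1 ≤ dOutV E u ∧ dOutV E u ≤ d + w)
      have h3 := Finset.card_union_le Lv ({v} : Finset V)
      have h4 : ({v} : Finset V).card = 1 := Finset.card_singleton v
      omega
    · -- degrees in Lv
      intro u hu
      rw [hLdef, Finset.mem_filter] at hu
      exact hu.2
    · -- Rv ⊆ NoutV E v
      rw [hRdef]; exact Finset.filter_subset _ _
    · -- 3l ≤ card Rv
      have hdisj : Disjoint W (NoutV E v \ Rv) := by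
        rw [Finset.disjoint_left]
        intro x hx hx'
        exact (hWmem x hx).2 (Finset.mem_sdiff.1 hx').1
      have hcov : W ∪ (NoutV E v \ Rv) ⊆ Finset.univ.filter fun u : V => dOutV E u ≤ d + w := by
        intro u hu
        rw [Finset.mem_filter]
        refine ⟨Finset.mem_univ u, ?_⟩
        rcases Finset.mem_union.1 hu with h | h
        · have := (hWmem u h).1; omega
        · rw [Finset.mem_sdiff, hRdef, Finset.mem_filter] at h
          have h2 : ¬ (d + w ≤ dOutV E u) := fun hh => h.2 ⟨h.1, hh⟩
          omega
      have h1 := Finset.card_le_card hcov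
      rw [Finset.card_union_of_disjoint hdisj] at h1
      have hRsub : Rv ⊆ NoutV E v := by rw [hRdef]; exact Finset.filter_subset _ _
      have h2 : (NoutV E v \ Rv).card = (NoutV E v).card - Rv.card :=
        Finset.card_sdiff_of_subset hRsub
      have h3 : Rv.card ≤ (NoutV E v).card := Finset.card_le_card hRsub
      have h4 : (NoutV E v).card = dOutV E v := rfl
      omega
    · -- degrees in Rv
      intro u hu
      rw [hRdef, Finset.mem_filter] at hu
      exact hu.2


end AlmostSemicomplete
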